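/- arXiv:0801.2123 — 2 statements merged into one kernel-verified Lean document; each statement's English description precedes it below -/
import Mathlib

section
/- Let E be a real normed vector space and let 𝓛, 𝓖₁, …, 𝓖_m : E → ℝ be continuously (Fréchet) differentiable on a neighborhood of ŷ ∈ E. Suppose ŷ is a weak local minimum of 𝓛 subject to the isoperimetric constraints 𝓖ᵢ(y) = 𝓖ᵢ(ŷ) for i = 1, …, m (i.e., there exists δ > 0 such that 𝓛(ŷ) ≤ 𝓛(y) for all y with ‖y − ŷ‖ < δ satisfying 𝓖ᵢ(y) = 𝓖ᵢ(ŷ) for all i). Then either (i) for every choice of directions v₁, …, v_m ∈ E, the m × m matrix with entries D𝓖ᵢ(ŷ)(v_j) has determinant zero, or (ii) there exist real constants λ₁, …, λ_m such that D𝓛(ŷ)(η) = ∑_{i=1}^{m} λᵢ D𝓖ᵢ(ŷ)(η) for every η ∈ E. -/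
/-- Lagrange multiplier theorem for the isoperimetric problem: if `y₀` is a
weak local minimum of `𝓛` subject to the constraints `𝓖 i y = 𝓖 i y₀`,
and `𝓛, 𝓖 1, …, 𝓖 m` are continuously differentiable on a neighborhood of
`y₀`, then either the `m × m` matrix `(D𝓖ᵢ(y₀)(v j))` has zero determinant
for every choice of directions `v`, or there are multipliers `λ i` with
`D𝓛(y₀)(η) = ∑ i, λ i * D𝓖ᵢ(y₀)(η)` for all `η`. -/
theorem isoperimetric_lagrange_multipliers
    {E : Type*} [NormedAddCommGroup E] [NormedSpace ℝ E]
    (m : ℕ) (𝓛 : E → ℝ) (𝓖 : Fin m → E → ℝ) (y₀ : E)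
    (hsmooth : ∃ U ∈ nhds y₀, ContDiffOn ℝ 1 𝓛 U ∧ ∀ i, ContDiffOn ℝ 1 (𝓖 i) U)
    (hmin : ∃ δ > 0, ∀ y : E, ‖y - y₀‖ < δ →
      (∀ i, 𝓖 i y = 𝓖 i y₀) → 𝓛 y₀ ≤ 𝓛 y) :
    (∀ v : Fin m → E,
      Matrix.det (Matrix.of fun i j : Fin m => fderiv ℝ (𝓖 i) y₀ (v j)) = 0) ∨
    (∃ lam : Fin m → ℝ, ∀ η : E,
      fderiv ℝ 𝓛 y₀ η = ∑ i, lam i * fderiv ℝ (𝓖 i) y₀ η) := by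
  classical
  obtain ⟨U, hU, hLU, hGU⟩ := hsmooth
  obtain ⟨δ, hδ, hmin⟩ := hmin
  set L' : E →L[ℝ] ℝ := fderiv ℝ 𝓛 y₀ with hL'
  set G' : Fin m → E →L[ℝ] ℝ := fun i => fderiv ℝ (𝓖 i) y₀ with hG'
  have hLd : HasStrictFDerivAt 𝓛 L' y₀ :=
    (hLU.contDiffAt hU).hasStrictFDerivAt one_ne_zero
  have hGd : ∀ i, HasStrictFDerivAt (𝓖 i) (G' i) y₀ := fun i =>
    ((hGU i).contDiffAt hU).hasStrictFDerivAt one_ne_zero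
  by_cases hdet : ∀ v : Fin m → E,
      Matrix.det (Matrix.of fun i j : Fin m => fderiv ℝ (𝓖 i) y₀ (v j)) = 0
  · exact Or.inl hdet
  push_neg at hdet
  obtain ⟨v, hv⟩ := hdet
  right
  set M : Matrix (Fin m) (Fin m) ℝ := Matrix.of fun i j => G' i (v j) with hM
  have hMdet : IsUnit M.det := isUnit_iff_ne_zero.2 hv
  -- key step: for every η, there are multipliers working on the span of η and the v's
  have key : ∀ η : E, ∃ lam : Fin m → ℝ,
      (∀ j, L' (v j) = ∑ i, lam i * G' i (v j)) ∧
      (L' η = ∑ i, lam i * G' i η) := by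
    intro η
    set s : Set E := insert η (Set.range v) with hs
    set S : Submodule ℝ E := Submodule.span ℝ s with hS
    have hsfin : s.Finite := (Set.finite_range v).insert η
    haveI : FiniteDimensional ℝ S := FiniteDimensional.span_of_finite ℝ hsfin
    set ι : S →L[ℝ] E := S.subtypeL with hι
    have hψ : HasStrictFDerivAt (fun x : S => y₀ + ι x) ι 0 :=
      ι.hasStrictFDerivAt.const_add y₀
    have h0 : y₀ + ι (0 : S) = y₀ := by simp
    have hφ' : HasStrictFDerivAt (fun x : S => 𝓛 (y₀ + ι x)) (L'.comp ι) 0 := by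
      have h := hLd
      rw [← h0] at h
      exact h.comp 0 hψ
    have hf' : ∀ i, HasStrictFDerivAt (fun x : S => 𝓖 i (y₀ + ι x)) ((G' i).comp ι) 0 := by
      intro i
      have h := hGd i
      rw [← h0] at h
      exact h.comp 0 hψ
    have hextr : IsLocalExtrOn (fun x : S => 𝓛 (y₀ + ι x))
        {x : S | ∀ i, 𝓖 i (y₀ + ι x) = 𝓖 i (y₀ + ι 0)} 0 := by
      apply IsMinFilter.isExtr
      have hball : Metric.ball (0 : S) δ ∈ nhdsWithin (0 : S)
          {x : S | ∀ i, 𝓖 i (y₀ + ι x) = 𝓖 i (y₀ + ι 0)} :=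
        mem_nhdsWithin_of_mem_nhds (Metric.ball_mem_nhds _ hδ)
      filter_upwards [hball, self_mem_nhdsWithin] with x hx hxc
      have hnorm : ‖(y₀ + ι x) - y₀‖ < δ := by
        simpa [hι, Submodule.coe_norm] using mem_ball_zero_iff.1 hx
      have hcon : ∀ i, 𝓖 i (y₀ + ι x) = 𝓖 i y₀ := by
        intro i; simpa [h0] using hxc i
      simpa [h0] using hmin _ hnorm hcon
    obtain ⟨Λ, Λ₀, hne, hsum⟩ :=
      hextr.exists_multipliers_of_hasStrictFDerivAt hf' hφ'
    have hrel : ∀ x : S, (∑ i, Λ i * G' i x) + Λ₀ * L' x = 0 := by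
      intro x
      have := DFunLike.congr_fun hsum x
      simpa [ContinuousLinearMap.sum_apply, mul_comm, hι] using this
    have hmem : ∀ j, v j ∈ S := fun j =>
      Submodule.subset_span (Set.mem_insert_of_mem _ ⟨j, rfl⟩)
    have hηmem : η ∈ S := Submodule.subset_span (Set.mem_insert _ _)
    by_cases hΛ₀ : Λ₀ = 0
    · exfalso
      have hΛ : Λ ≠ 0 := by
        intro h
        exact hne (by simp [h, hΛ₀, Prod.ext_iff])
      have hrow : Matrix.vecMul Λ M = 0 := by
        funext j
        have := hrel ⟨v j, hmem j⟩
        simpa [hΛ₀, Matrix.vecMul, dotProduct, hM, hι] using this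
      have : Λ = 0 := by
        have h1 : Matrix.vecMul (Matrix.vecMul Λ M) M⁻¹ = 0 := by
          rw [hrow]; simp
        rwa [Matrix.vecMul_vecMul, Matrix.mul_nonsing_inv _ hMdet, Matrix.vecMul_one] at h1
      exact hΛ this
    · refine ⟨fun i => -Λ i / Λ₀, ?_, ?_⟩
      · intro j
        have h := hrel ⟨v j, hmem j⟩
        have h' : (∑ i, Λ i * G' i (v j)) + Λ₀ * L' (v j) = 0 := by
          simpa [hι] using h
        rw [Finset.sum_congr rfl (fun i _ => by
          rw [div_mul_eq_mul_div, neg_mul] : ∀ i ∈ Finset.univ,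
            (-Λ i / Λ₀) * G' i (v j) = -(Λ i * G' i (v j)) / Λ₀)]
        rw [← Finset.sum_div, Finset.sum_neg_distrib, neg_div]
        field_simp
        linarith
      · have h := hrel ⟨η, hηmem⟩
        have h' : (∑ i, Λ i * G' i η) + Λ₀ * L' η = 0 := by
          simpa [hι] using h
        rw [Finset.sum_congr rfl (fun i _ => by
          rw [div_mul_eq_mul_div, neg_mul] : ∀ i ∈ Finset.univ,
            (-Λ i / Λ₀) * G' i η = -(Λ i * G' i η) / Λ₀)]
        rw [← Finset.sum_div, Finset.sum_neg_distrib, neg_div]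
        field_simp
        linarith
  -- uniqueness of the multipliers via the invertible matrix
  have huniq : ∀ l : Fin m → ℝ, (∀ j, L' (v j) = ∑ i, l i * G' i (v j)) →
      l = Matrix.vecMul (fun j => L' (v j)) M⁻¹ := by
    intro l hl
    have hlM : Matrix.vecMul l M = fun j => L' (v j) := by
      funext j
      simp [Matrix.vecMul, dotProduct, hM, (hl j).symm]
    calc l = Matrix.vecMul (Matrix.vecMul l M) M⁻¹ := by
            rw [Matrix.vecMul_vecMul, Matrix.mul_nonsing_inv _ hMdet, Matrix.vecMul_one]
      _ = Matrix.vecMul (fun j => L' (v j)) M⁻¹ := by rw [hlM]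
  obtain ⟨lam, hlamv, -⟩ := key 0
  refine ⟨lam, fun η => ?_⟩
  obtain ⟨lam', hlam'v, hlam'η⟩ := key η
  have : lam' = lam := by rw [huniq lam' hlam'v, huniq lam hlamv]
  rw [← this]
  exact hlam'η
end

section
/- Let E be a real normed vector space, let d ≥ 2, and let L₁, …, L_d : E → ℝ be continuously (Fréchet) differentiable on a neighborhood of ŷ ∈ E. If ŷ is a weak locally Pareto optimal solution for (L₁, …, L_d), then for each i ∈ {1, …, d} one of the following holds: (i) for every choice of directions v_j ∈ E (j ∈ {1, …, d}, j ≠ i), the (d−1) × (d−1) matrix with entries DL_j(ŷ)(v_k), j, k ∈ {1, …, d} \ {i}, has determinant zero; or (ii) there exist real constants λ_j (j ≠ i) such that DL_i(ŷ)(η) = ∑_{j ≠ i} λ_j DL_j(ŷ)(η) for every η ∈ E. -/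
open Filter Set


/-- Necessary condition for weak local Pareto optimality: if `y₀` is a weak
locally Pareto optimal solution for continuously differentiable functionals
`L 1, …, L d` (`d ≥ 2`), then for each `i` either the `(d-1) × (d-1)` matrix
`(DL_j(y₀)(v k))` indexed by `j, k ≠ i` is singular for every choice of
directions `v`, or `DL_i(y₀)` is a linear combination of the `DL_j(y₀)`,
`j ≠ i`. -/
theorem pareto_necessary_condition
    {E : Type*} [NormedAddCommGroup E] [NormedSpace ℝ E]
    (d : ℕ) (hd : 2 ≤ d) (L : Fin d → E → ℝ) (y₀ : E)
    (hsmooth : ∃ U ∈ nhds y₀, ∀ i, ContDiffOn ℝ 1 (L i) U)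
    (hpareto : ∃ δ > 0, ¬ ∃ y : E, ‖y - y₀‖ < δ ∧
      (∀ i, L i y ≤ L i y₀) ∧ (∃ j, L j y < L j y₀)) :
    ∀ i : Fin d,
      (∀ v : {j : Fin d // j ≠ i} → E,
        Matrix.det (Matrix.of fun j k : {j : Fin d // j ≠ i} =>
          fderiv ℝ (L j.1) y₀ (v k)) = 0) ∨
      (∃ lam : {j : Fin d // j ≠ i} → ℝ, ∀ η : E,
        fderiv ℝ (L i) y₀ η = ∑ j, lam j * fderiv ℝ (L j.1) y₀ η) := by
  classical
  obtain ⟨U, hU, hC⟩ := hsmooth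
  obtain ⟨δ, hδ, hP⟩ := hpareto
  set f : Fin d → E →L[ℝ] ℝ := fun j => fderiv ℝ (L j) y₀ with hfdef
  have hstrict : ∀ j, HasStrictFDerivAt (L j) (f j) y₀ :=
    fun j => ((hC j).contDiffAt hU).hasStrictFDerivAt one_ne_zero
  -- Step 1: the derivatives are linearly dependent
  have key : ∃ c : Fin d → ℝ, c ≠ 0 ∧ ∀ η, ∑ j, c j * f j η = 0 := by
    by_contra hcon
    push_neg at hcon
    set T : E →ₗ[ℝ] (Fin d → ℝ) := LinearMap.pi (fun j => (f j : E →ₗ[ℝ] ℝ)) with hTdef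
    have hT : LinearMap.range T = ⊤ := by
      by_contra hne
      obtain ⟨φ, hφ0, hφ⟩ := Submodule.exists_dual_map_eq_bot_of_lt_top
        (p := LinearMap.range T) (lt_top_iff_ne_top.2 hne) inferInstance
      set c : Fin d → ℝ := fun j => φ (fun k => if j = k then 1 else 0) with hcdef
      have hc0 : c ≠ 0 := by
        intro h
        apply hφ0
        refine LinearMap.ext fun x => ?_
        rw [LinearMap.pi_apply_eq_sum_univ φ x]
        simp only [LinearMap.zero_apply]
        refine Finset.sum_eq_zero fun j _ => ?_
        have : c j = 0 := congrFun h j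
        rw [hcdef] at this
        simp [this]
      obtain ⟨η, hη⟩ := hcon c hc0
      apply hη
      have hmem : φ (T η) = 0 := by
        have : φ (T η) ∈ Submodule.map φ (LinearMap.range T) :=
          Submodule.mem_map_of_mem (LinearMap.mem_range_self T η)
        rw [hφ] at this
        simpa using this
      rw [LinearMap.pi_apply_eq_sum_univ φ (T η)] at hmem
      rw [← hmem]
      refine Finset.sum_congr rfl fun j _ => ?_
      simp only [smul_eq_mul]
      rw [mul_comm]
      rfl
    have hη' : ∀ k : Fin d, ∃ e : E, T e = Pi.single k 1 := fun k => by
      have := LinearMap.range_eq_top.1 hT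
      exact this (Pi.single k 1)
    choose η hη using hη'
    set B : (Fin d → ℝ) →L[ℝ] E :=
      ∑ k, (ContinuousLinearMap.proj k).smulRight (η k) with hBdef
    have hB : ∀ x, B x = ∑ k, x k • η k := by
      intro x
      rw [hBdef]
      simp [ContinuousLinearMap.sum_apply]
    set g : (Fin d → ℝ) → E := fun x => y₀ + B x with hgdef
    have hg0 : g 0 = y₀ := by simp [hgdef]
    have hgd : HasStrictFDerivAt g B 0 := B.hasStrictFDerivAt.const_add y₀
    set Φ : (Fin d → ℝ) → (Fin d → ℝ) := fun x j => L j (g x) with hΦdef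
    have hΦ0 : ∀ j, Φ 0 j = L j y₀ := by
      intro j
      show L j (g 0) = L j y₀
      rw [hg0]
    have hΦd : HasStrictFDerivAt Φ (ContinuousLinearMap.pi fun j => (f j).comp B) 0 := by
      apply hasStrictFDerivAt_pi.2
      intro j
      have h1 := hstrict j
      rw [← hg0] at h1
      exact h1.comp 0 hgd
    have hjk : ∀ j k, f j (η k) = if j = k then 1 else 0 := by
      intro j k
      have h1 := congrFun (hη k) j
      rw [Pi.single_apply] at h1
      exact h1
    have hid : (ContinuousLinearMap.pi fun j => (f j).comp B) =
        ((ContinuousLinearEquiv.refl ℝ (Fin d → ℝ) :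
          (Fin d → ℝ) ≃L[ℝ] (Fin d → ℝ)) : (Fin d → ℝ) →L[ℝ] (Fin d → ℝ)) := by
      refine ContinuousLinearMap.ext fun x => funext fun j => ?_
      simp only [ContinuousLinearMap.pi_apply, ContinuousLinearMap.comp_apply,
        ContinuousLinearEquiv.coe_coe, ContinuousLinearEquiv.refl_apply]
      rw [hB, map_sum]
      simp only [map_smul, smul_eq_mul, hjk]
      simp
    rw [hid] at hΦd
    have hmap := hΦd.map_nhds_eq_of_equiv
    have hS : g ⁻¹' Metric.ball y₀ δ ∈ nhds (0 : Fin d → ℝ) := by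
      have hgc : Continuous g := continuous_const.add B.continuous
      refine (hgc.continuousAt (x := 0)).preimage_mem_nhds ?_
      rw [hg0]
      exact Metric.ball_mem_nhds y₀ hδ
    have himg : Φ '' (g ⁻¹' Metric.ball y₀ δ) ∈ nhds (Φ 0) := by
      rw [← hmap]
      exact mem_map.2 (Filter.mem_of_superset hS (Set.subset_preimage_image _ _))
    obtain ⟨r, hr, hball⟩ := Metric.mem_nhds_iff.1 himg
    have hz : (fun j => Φ 0 j - r / 2) ∈ Metric.ball (Φ 0) r := by
      rw [Metric.mem_ball, dist_pi_lt_iff hr]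
      intro j
      simp only [Real.dist_eq]
      rw [show Φ 0 j - r / 2 - Φ 0 j = -(r/2) by ring, abs_neg, abs_of_pos (by linarith)]
      linarith
    obtain ⟨x, hx, hΦx⟩ := hball hz
    apply hP
    refine ⟨g x, ?_, ?_, ?_⟩
    · simpa [Metric.mem_ball, dist_eq_norm] using hx
    · intro j
      have h1 : L j (g x) = L j y₀ - r / 2 := by
        have h2 := congrFun hΦx j
        have h3 : Φ x j = L j (g x) := rfl
        rw [h3, hΦ0 j] at h2
        exact h2
      linarith
    · refine ⟨⟨0, by omega⟩, ?_⟩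
      have h1 : L ⟨0, by omega⟩ (g x) = L ⟨0, by omega⟩ y₀ - r / 2 := by
        have h2 := congrFun hΦx ⟨0, by omega⟩
        have h3 : Φ x ⟨0, by omega⟩ = L ⟨0, by omega⟩ (g x) := rfl
        rw [h3, hΦ0 ⟨0, by omega⟩] at h2
        exact h2
      linarith
  -- Step 2: linear algebra
  obtain ⟨c, hc0, hc⟩ := key
  intro i
  have hsum_subtype : ∀ (F : Fin d → ℝ),
      ∑ j : {j : Fin d // j ≠ i}, F j.1 = ∑ j ∈ Finset.univ.erase i, F j := by
    intro F
    rw [Finset.sum_subtype (p := fun j => j ≠ i) (Finset.univ.erase i)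
      (fun x => by simp) F]
  by_cases hci : c i = 0
  · left
    intro v
    rw [← Matrix.exists_vecMul_eq_zero_iff]
    refine ⟨fun j => c j.1, ?_, ?_⟩
    · intro h
      apply hc0
      ext j
      by_cases hji : j = i
      · rw [hji, hci]; rfl
      · exact congrFun h ⟨j, hji⟩
    · funext k
      have h1 := hc (v k)
      have h2 : c i * f i (v k) + ∑ j ∈ Finset.univ.erase i, c j * f j (v k) = 0 := by
        rw [Finset.add_sum_erase Finset.univ (fun j => c j * f j (v k)) (Finset.mem_univ i)]
        exact h1
      rw [hci, zero_mul, zero_add] at h2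
      simp only [Matrix.vecMul, dotProduct, Matrix.of_apply, Pi.zero_apply]
      rw [hsum_subtype (fun j => c j * f j (v k))]
      exact h2
  · right
    refine ⟨fun j => -(c j.1) / c i, fun η => ?_⟩
    have h1 := hc η
    have h2 : c i * f i η + ∑ j ∈ Finset.univ.erase i, c j * f j η = 0 := by
      rw [Finset.add_sum_erase Finset.univ (fun j => c j * f j η) (Finset.mem_univ i)]
      exact h1
    have h3 : ∑ j : {j : Fin d // j ≠ i}, (-(c j.1) / c i) * f j.1 η
        = (-(1 / c i)) * ∑ j ∈ Finset.univ.erase i, c j * f j η := by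
      rw [Finset.mul_sum, hsum_subtype (fun j => (-(c j) / c i) * f j η)]
      refine Finset.sum_congr rfl fun j _ => ?_
      field_simp
    rw [h3]
    have h4 : ∑ j ∈ Finset.univ.erase i, c j * f j η = -(c i * f i η) := by linarith
    rw [h4]
    field_simp
    rfl
end
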